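/- Let e, m, ℓ : [0,∞) × ℝ → ℝ be C¹ with ∂_t e + ∂_x m = 0 and ∂_t m + ∂_x ℓ = 0, and suppose (e - 2m + ℓ)(τ, C₀ + τ) = 0 for all τ ≥ 0. Then for x₀ < C₀ and all t > 0: ∫_0^t (e - 2m + ℓ)(τ, x₀ + τ) dτ + ∫_{x₀+t}^{C₀+t} (e - m)(t, y) dy = ∫_{x₀}^{C₀} (e - m)(0, y) dy. -/

import Mathlib

open MeasureTheory intervalIntegral Set Metric

noncomputable def pd1' (f : ℝ → ℝ → ℝ) (t x : ℝ) : ℝ :=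
  fderiv ℝ (fun p : ℝ × ℝ => f p.1 p.2) (t, x) (1, 0)

noncomputable def pd2' (f : ℝ → ℝ → ℝ) (t x : ℝ) : ℝ :=
  fderiv ℝ (fun p : ℝ × ℝ => f p.1 p.2) (t, x) (0, 1)

variable {f : ℝ → ℝ → ℝ}

theorem hasDerivAt_pd1 (hf : ContDiff ℝ 1 (fun p : ℝ × ℝ => f p.1 p.2)) (t x : ℝ) :
    HasDerivAt (fun s => f s x) (pd1' f t x) t := by
  have h := (hf.differentiable one_ne_zero (t, x)).hasFDerivAt
  have hc : HasDerivAt (fun s : ℝ => (s, x)) ((1 : ℝ), (0 : ℝ)) t :=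
    (hasDerivAt_id t).prodMk (hasDerivAt_const t x)
  exact h.comp_hasDerivAt t hc

theorem hasDerivAt_pd2 (hf : ContDiff ℝ 1 (fun p : ℝ × ℝ => f p.1 p.2)) (t x : ℝ) :
    HasDerivAt (fun y => f t y) (pd2' f t x) x := by
  have h := (hf.differentiable one_ne_zero (t, x)).hasFDerivAt
  have hc : HasDerivAt (fun y : ℝ => (t, y)) ((0 : ℝ), (1 : ℝ)) x :=
    (hasDerivAt_const x t).prodMk (hasDerivAt_id x)
  exact h.comp_hasDerivAt x hc

theorem pd1'_eq (hf : ContDiff ℝ 1 (fun p : ℝ × ℝ => f p.1 p.2)) (t x : ℝ) : deriv (fun s => f s x) t = pd1' f t x :=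
  (hasDerivAt_pd1 hf t x).deriv

theorem pd2'_eq (hf : ContDiff ℝ 1 (fun p : ℝ × ℝ => f p.1 p.2)) (t x : ℝ) : deriv (fun y => f t y) x = pd2' f t x :=
  (hasDerivAt_pd2 hf t x).deriv

theorem hasDerivAt_slant (hf : ContDiff ℝ 1 (fun p : ℝ × ℝ => f p.1 p.2)) (c t : ℝ) :
    HasDerivAt (fun s => f s (c + s)) (pd1' f t (c + t) + pd2' f t (c + t)) t := by
  have h := (hf.differentiable one_ne_zero (t, c + t)).hasFDerivAt
  have hc : HasDerivAt (fun s : ℝ => (s, c + s)) ((1 : ℝ), (1 : ℝ)) t :=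
    (hasDerivAt_id t).prodMk ((hasDerivAt_id t).const_add c)
  have := h.comp_hasDerivAt t hc
  have hsplit : ((1 : ℝ), (1 : ℝ)) = ((1 : ℝ), (0 : ℝ)) + ((0 : ℝ), (1 : ℝ)) := by
    simp [Prod.ext_iff]
  rw [hsplit, map_add] at this
  exact this

theorem continuous_pd1' (hf : ContDiff ℝ 1 (fun p : ℝ × ℝ => f p.1 p.2)) : Continuous fun p : ℝ × ℝ => pd1' f p.1 p.2 := by
  have h := (hf.continuous_fderiv one_ne_zero)
  have : Continuous fun p : ℝ × ℝ =>
      fderiv ℝ (fun q : ℝ × ℝ => f q.1 q.2) p ((1 : ℝ), (0 : ℝ)) :=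
    h.clm_apply continuous_const
  simpa [pd1'] using this

theorem continuous_pd2' (hf : ContDiff ℝ 1 (fun p : ℝ × ℝ => f p.1 p.2)) : Continuous fun p : ℝ × ℝ => pd2' f p.1 p.2 := by
  have h := (hf.continuous_fderiv one_ne_zero)
  have : Continuous fun p : ℝ × ℝ =>
      fderiv ℝ (fun q : ℝ × ℝ => f q.1 q.2) p ((0 : ℝ), (1 : ℝ)) :=
    h.clm_apply continuous_const
  simpa [pd2'] using this
open MeasureTheory intervalIntegral Set Metric in
theorem stmt17 (e m ℓ : ℝ → ℝ → ℝ) (C₀ x₀ : ℝ) (hx : x₀ < C₀)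
    (he : ContDiff ℝ 1 (fun p : ℝ × ℝ => e p.1 p.2))
    (hm : ContDiff ℝ 1 (fun p : ℝ × ℝ => m p.1 p.2))
    (hℓ : ContDiff ℝ 1 (fun p : ℝ × ℝ => ℓ p.1 p.2))
    (pde1 : ∀ t x : ℝ, deriv (fun s => e s x) t + deriv (fun y => m t y) x = 0)
    (pde2 : ∀ t x : ℝ, deriv (fun s => m s x) t + deriv (fun y => ℓ t y) x = 0)
    (hbdry : ∀ τ ≥ (0:ℝ),
      e τ (C₀ + τ) - 2 * m τ (C₀ + τ) + ℓ τ (C₀ + τ) = 0) :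
    ∀ t > (0:ℝ),
      (∫ τ in (0:ℝ)..t, (e τ (x₀ + τ) - 2 * m τ (x₀ + τ) + ℓ τ (x₀ + τ))) +
        (∫ y in (x₀ + t)..(C₀ + t), (e t y - m t y))
        = ∫ y in x₀..C₀, (e 0 y - m 0 y) := by
  intro t ht
  have hv : ContDiff ℝ 1
      (fun p : ℝ × ℝ => e p.1 p.2 - 2 * m p.1 p.2 + ℓ p.1 p.2) :=
    (he.sub (contDiff_const.mul hm)).add hℓ
  -- the x-partial of v := e - 2m + ℓ
  set w : ℝ → ℝ → ℝ :=
    pd2' (fun τ x => e τ x - 2 * m τ x + ℓ τ x) with hw_def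
  have hvx : ∀ s x : ℝ,
      HasDerivAt (fun y => e s y - 2 * m s y + ℓ s y) (w s x) x := by
    intro s x
    simpa using hasDerivAt_pd2 (f := fun τ x => e τ x - 2 * m τ x + ℓ τ x) hv s x
  have hwcont : Continuous fun p : ℝ × ℝ => w p.1 p.2 :=
    continuous_pd2' (f := fun τ x => e τ x - 2 * m τ x + ℓ τ x) hv
  -- slant derivative of u := e - m
  have hslant : ∀ (y s : ℝ),
      HasDerivAt (fun τ => e τ (y + τ) - m τ (y + τ)) (w s (y + s)) s := by
    intro y s
    have h1 := hasDerivAt_slant he y s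
    have h2 := hasDerivAt_slant hm y s
    have h := h1.sub h2
    have key : ∀ x : ℝ,
        w s x = pd1' e s x + pd2' e s x - (pd1' m s x + pd2' m s x) := by
      intro x
      have e1 : pd1' e s x = - pd2' m s x := by
        have h := pde1 s x
        rw [pd1'_eq he, pd2'_eq hm] at h; linarith
      have e2 : pd1' m s x = - pd2' ℓ s x := by
        have h := pde2 s x
        rw [pd1'_eq hm, pd2'_eq hℓ] at h; linarith
      have hcomb : HasDerivAt (fun y => e s y - 2 * m s y + ℓ s y)
          (pd2' e s x - 2 * pd2' m s x + pd2' ℓ s x) x :=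
        ((hasDerivAt_pd2 he s x).sub
          ((hasDerivAt_pd2 hm s x).const_mul 2)).add (hasDerivAt_pd2 hℓ s x)
      have huniq := (hvx s x).unique hcomb
      rw [huniq, e1, e2]; ring
    rw [key]
    exact h
  -- continuity of v along the left slanted boundary
  have hvcont : Continuous fun τ : ℝ =>
      e τ (x₀ + τ) - 2 * m τ (x₀ + τ) + ℓ τ (x₀ + τ) := by
    have := hv.continuous.comp
      (continuous_id.prodMk (continuous_const.add continuous_id) :
        Continuous fun τ : ℝ => (τ, x₀ + τ))
    exact this
  -- Part A : derivative of the boundary-flux integral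
  have partA : ∀ s : ℝ, HasDerivAt
      (fun r => ∫ τ in (0:ℝ)..r, (e τ (x₀ + τ) - 2 * m τ (x₀ + τ) + ℓ τ (x₀ + τ)))
      (e s (x₀ + s) - 2 * m s (x₀ + s) + ℓ s (x₀ + s)) s := by
    intro s
    exact (hvcont.integral_hasStrictDerivAt 0 s).hasDerivAt
  -- Part B : derivative of the moving-window integral (parametric)
  have partB : ∀ s : ℝ, HasDerivAt
      (fun r => ∫ y in x₀..C₀, (e r (y + r) - m r (y + r)))
      (∫ y in x₀..C₀, w s (y + s)) s := by
    intro s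
    -- compact bound
    obtain ⟨M, hM⟩ : ∃ M : ℝ, ∀ p ∈
        (Icc (s - 1) (s + 1) ×ˢ Icc (min x₀ C₀ + (s - 1)) (max x₀ C₀ + (s + 1))),
        ‖w p.1 p.2‖ ≤ M := by
      have hK : IsCompact
          (Icc (s - 1) (s + 1) ×ˢ Icc (min x₀ C₀ + (s - 1)) (max x₀ C₀ + (s + 1))) :=
        isCompact_Icc.prod isCompact_Icc
      exact hK.exists_bound_of_continuousOn hwcont.continuousOn
    have hres := intervalIntegral.hasDerivAt_integral_of_dominated_loc_of_deriv_le
      (F := fun r y => e r (y + r) - m r (y + r))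
      (F' := fun r y => w r (y + r)) (x₀ := s) (a := x₀) (b := C₀)
      (bound := fun _ => M) (μ := volume) (s := ball s 1) (ball_mem_nhds s one_pos)
      ?_ ?_ ?_ ?_ ?_ ?_
    · exact hres.2
    · -- measurability of F r
      filter_upwards with r
      have : Continuous fun y => e r (y + r) - m r (y + r) := by
        have h1 := he.continuous.comp
          (continuous_const.prodMk (continuous_id.add continuous_const) :
            Continuous fun y : ℝ => (r, y + r))
        have h2 := hm.continuous.comp
          (continuous_const.prodMk (continuous_id.add continuous_const) :
            Continuous fun y : ℝ => (r, y + r))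
        exact h1.sub h2
      exact this.aestronglyMeasurable
    · -- integrability of F s
      have : Continuous fun y => e s (y + s) - m s (y + s) := by
        have h1 := he.continuous.comp
          (continuous_const.prodMk (continuous_id.add continuous_const) :
            Continuous fun y : ℝ => (s, y + s))
        have h2 := hm.continuous.comp
          (continuous_const.prodMk (continuous_id.add continuous_const) :
            Continuous fun y : ℝ => (s, y + s))
        exact h1.sub h2
      exact this.intervalIntegrable _ _
    · -- measurability of F' s
      have : Continuous fun y => w s (y + s) :=
        hwcont.comp (continuous_const.prodMk (continuous_id.add continuous_const))
      exact this.aestronglyMeasurable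
    · -- bound
      filter_upwards with y hy r hr
      have hy' : y ∈ Ioc (min x₀ C₀) (max x₀ C₀) := hy
      have hr' : |r - s| < 1 := by
        simpa [Real.dist_eq] using mem_ball.mp hr
      have hr1 : s - 1 ≤ r := by cases abs_lt.mp hr' with | intro h1 h2 => linarith
      have hr2 : r ≤ s + 1 := by cases abs_lt.mp hr' with | intro h1 h2 => linarith
      refine hM (r, y + r) ⟨⟨hr1, hr2⟩, ?_, ?_⟩
      · show x₀ ⊓ C₀ + (s - 1) ≤ y + r
        have := hy'.1; linarith
      · show y + r ≤ x₀ ⊔ C₀ + (s + 1)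
        have := hy'.2; linarith
    · exact intervalIntegrable_const
    · -- differentiability in the parameter
      filter_upwards with y _ r _
      exact hslant y r
  -- Evaluate the Part B derivative via FTC
  have partB' : ∀ s : ℝ,
      (∫ y in x₀..C₀, w s (y + s))
        = (e s (C₀ + s) - 2 * m s (C₀ + s) + ℓ s (C₀ + s))
          - (e s (x₀ + s) - 2 * m s (x₀ + s) + ℓ s (x₀ + s)) := by
    intro s
    have hcw : Continuous fun z => w s z :=
      hwcont.comp (continuous_const.prodMk continuous_id)
    have hsub : (∫ y in x₀..C₀, w s (y + s)) = ∫ z in (x₀+s)..(C₀+s), w s z :=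
      intervalIntegral.integral_comp_add_right (fun z => w s z) s
    rw [hsub]
    have := intervalIntegral.integral_eq_sub_of_hasDerivAt
      (f := fun z => e s z - 2 * m s z + ℓ s z) (f' := fun z => w s z)
      (a := x₀ + s) (b := C₀ + s)
      (fun z _ => hvx s z) (hcw.intervalIntegrable _ _)
    rw [this]
  -- total function Φ
  set Φ : ℝ → ℝ := fun r =>
    (∫ τ in (0:ℝ)..r, (e τ (x₀ + τ) - 2 * m τ (x₀ + τ) + ℓ τ (x₀ + τ))) +
      ∫ y in x₀..C₀, (e r (y + r) - m r (y + r)) with hΦ_def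
  have hΦ : ∀ s : ℝ, HasDerivAt Φ
      (e s (C₀ + s) - 2 * m s (C₀ + s) + ℓ s (C₀ + s)) s := by
    intro s
    have h := (partA s).add (partB s)
    rw [partB' s] at h
    have hr : e s (C₀ + s) - 2 * m s (C₀ + s) + ℓ s (C₀ + s) = (e s (x₀ + s) - 2 * m s (x₀ + s) + ℓ s (x₀ + s)) + ((e s (C₀ + s) - 2 * m s (C₀ + s) + ℓ s (C₀ + s)) - (e s (x₀ + s) - 2 * m s (x₀ + s) + ℓ s (x₀ + s))) := by ring
    rw [hr]; exact h
  have hΦcont : Continuous Φ :=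
    continuous_iff_continuousAt.mpr fun s => (hΦ s).continuousAt
  have hconst : Φ t = Φ 0 := by
    have := constant_of_has_deriv_right_zero (f := Φ) (a := 0) (b := t)
      hΦcont.continuousOn ?_ t ⟨le_of_lt ht, le_refl t⟩
    · exact this
    · intro s hs
      have h0 : e s (C₀ + s) - 2 * m s (C₀ + s) + ℓ s (C₀ + s) = 0 :=
        hbdry s hs.1
      have := (hΦ s).hasDerivWithinAt (s := Ici s)
      rwa [h0] at this
  have hΦ0 : Φ 0 = ∫ y in x₀..C₀, (e 0 y - m 0 y) := by
    simp [hΦ_def]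
  have hΦt : Φ t =
      (∫ τ in (0:ℝ)..t, (e τ (x₀ + τ) - 2 * m τ (x₀ + τ) + ℓ τ (x₀ + τ))) +
        ∫ y in (x₀ + t)..(C₀ + t), (e t y - m t y) := by
    simp only [hΦ_def]
    congr 1
    exact intervalIntegral.integral_comp_add_right (fun y => e t y - m t y) t
  rw [← hΦt, hconst, hΦ0]
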